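/- If the Grover walk on a finite connected graph G is periodic, then every eigenvalue of the transition matrix P = D^{-1}A is of the form cos(2πq) for some rational number q; in particular every eigenvalue of P is an algebraic number whose value 2cos(2πq) is an algebraic integer. -/

import Mathlib

open Matrix Complex

variable {V : Type*} [Fintype V] [DecidableEq V]

instance (G : SimpleGraph V) : DecidableEq G.Dart :=
  fun a b => decidable_of_iff _ (SimpleGraph.Dart.ext_iff a b).symm

/-- The flip-flop shift on the arc (dart) space. -/
noncomputable def groverShift (G : SimpleGraph V) [DecidableRel G.Adj] :
    Matrix G.Dart G.Dart ℂ :=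
  fun a b => if b = a.symm then 1 else 0

/-- The Grover coin, acting blockwise on arcs grouped by tail vertex:
the block at a vertex `v` of degree `d` is `2/d J - I`. -/
noncomputable def groverCoin (G : SimpleGraph V) [DecidableRel G.Adj] :
    Matrix G.Dart G.Dart ℂ :=
  fun a b => (if a.toProd.1 = b.toProd.1 then (2 : ℂ) / (G.degree a.toProd.1) else 0)
    - (if a = b then 1 else 0)

/-- The Grover walk time-evolution operator `U = S C`. -/
noncomputable def groverU (G : SimpleGraph V) [DecidableRel G.Adj] :
    Matrix G.Dart G.Dart ℂ := groverShift G * groverCoin G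

/-- The transition matrix `P = D⁻¹ A` of the simple random walk, over `ℂ`. -/
noncomputable def transMat (G : SimpleGraph V) [DecidableRel G.Adj] :
    Matrix V V ℂ :=
  fun u v => if G.Adj u v then (1 : ℂ) / (G.degree u) else 0

/-- The boundary map `d : ℂ^V → ℂ^A`, `(dφ)(a) = φ(t(a))/√(deg t(a))`. -/
noncomputable def boundaryMap (G : SimpleGraph V) [DecidableRel G.Adj]
    (φ : V → ℂ) : G.Dart → ℂ :=
  fun a => φ a.toProd.2 / (Real.sqrt (G.degree a.toProd.2) : ℝ)

/-- Sum over darts with a given origin equals the sum over neighbors. -/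
lemma aux_dart_sum (G : SimpleGraph V) [DecidableRel G.Adj] (u : V) (F : V → ℂ) :
    ∑ b ∈ Finset.univ.filter (fun b : G.Dart => u = b.toProd.1), F b.toProd.2
      = ∑ v ∈ G.neighborFinset u, F v := by
  symm
  apply Finset.sum_bij (i := fun v hv => (⟨(u, v), by
    simpa [SimpleGraph.mem_neighborFinset] using hv⟩ : G.Dart))
  · intro v hv
    simp
  · intro v hv w hw h
    simpa using congrArg (fun d : G.Dart => d.toProd.2) h
  · intro b hb
    simp only [Finset.mem_filter, Finset.mem_univ, true_and] at hb
    refine ⟨b.toProd.2, ?_, ?_⟩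
    · simpa [SimpleGraph.mem_neighborFinset, ← hb] using b.adj
    · cases b with
      | mk p hp => cases p; simp_all
  · intro v hv; rfl

lemma aux_coin_mulVec (G : SimpleGraph V) [DecidableRel G.Adj] (w : G.Dart → ℂ) (c : G.Dart) :
    (groverCoin G).mulVec w c =
      (2 / (G.degree c.toProd.1 : ℂ)) *
        ∑ b ∈ Finset.univ.filter (fun b : G.Dart => c.toProd.1 = b.toProd.1), w b - w c := by
  unfold groverCoin
  simp only [Matrix.mulVec, dotProduct, sub_mul, Finset.sum_sub_distrib, ite_mul, zero_mul, one_mul]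
  rw [← Finset.sum_filter, Finset.mul_sum, Finset.sum_ite_eq (Finset.univ) c w]
  simp

lemma aux_shift_mulVec (G : SimpleGraph V) [DecidableRel G.Adj] (w : G.Dart → ℂ) (a : G.Dart) :
    (groverShift G).mulVec w a = w a.symm := by
  unfold groverShift
  simp [Matrix.mulVec, dotProduct]

lemma aux_groverU_mulVec (G : SimpleGraph V) [DecidableRel G.Adj] (w : G.Dart → ℂ) (a : G.Dart) :
    (groverU G).mulVec w a =
      (2 / (G.degree a.toProd.2 : ℂ)) *
        ∑ b ∈ Finset.univ.filter (fun b : G.Dart => a.toProd.2 = b.toProd.1), w b - w a.symm := by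
  have : (groverU G).mulVec w = (groverShift G).mulVec ((groverCoin G).mulVec w) := by
    rw [groverU, ← Matrix.mulVec_mulVec]
  rw [this, aux_shift_mulVec, aux_coin_mulVec]
  rfl

lemma aux_int_two : IsIntegral ℤ ((2:ℝ)) := by
  simpa using isIntegral_algebraMap (R := ℤ) (A := ℝ) (x := 2)

/-- If the Grover walk is periodic then every eigenvalue of the transition matrix `P`
is `cos (2π q)` for some rational `q`; in particular its double is an algebraic integer. -/
theorem grover_periodic_trans_eigenvalues (G : SimpleGraph V) [DecidableRel G.Adj]
    (hG : G.Connected) (hper : ∃ k : ℕ, 0 < k ∧ groverU G ^ k = 1) :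
    ∀ μ : ℝ, (∃ x : V → ℂ, x ≠ 0 ∧ (transMat G).mulVec x = (μ : ℂ) • x) →
      ∃ q : ℚ, μ = Real.cos (2 * Real.pi * q) ∧ IsIntegral ℤ (2 * μ) := by
  obtain ⟨k, hk, hUk⟩ := hper
  rintro μ ⟨x, hx0, hx⟩
  obtain ⟨v0, hv0⟩ : ∃ v, x v ≠ 0 := by
    by_contra hc; push_neg at hc; exact hx0 (funext hc)
  rcases subsingleton_or_nontrivial V with hV | hV
  · -- single-vertex graph : μ = 0
    have hP : ∀ u w, transMat G u w = 0 := by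
      intro u w
      have : ¬ G.Adj u w := by
        rw [Subsingleton.elim u w]; exact G.irrefl
      simp [transMat, this]
    have h0 : (0 : ℂ) = (μ:ℂ) * x v0 := by
      have := congrFun hx v0
      simp only [Matrix.mulVec, dotProduct, Pi.smul_apply, smul_eq_mul] at this
      rw [← this]
      simp [hP]
    have hμ : μ = 0 := by
      rcases mul_eq_zero.mp h0.symm with h | h
      · exact_mod_cast h
      · exact absurd h hv0
    refine ⟨1/4, ?_, ?_⟩
    · rw [hμ]
      rw [show (2 * Real.pi * ((1/4 : ℚ) : ℝ)) = Real.pi / 2 by push_cast; ring]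
      rw [Real.cos_pi_div_two]
    · rw [hμ]; simpa using isIntegral_zero
  -- nontrivial case: every vertex has positive degree
  have hdegpos : ∀ u : V, 0 < G.degree u := by
    intro u
    rw [SimpleGraph.degree_pos_iff_exists_adj]
    obtain ⟨w, hw⟩ := exists_ne u
    obtain ⟨p⟩ := hG.preconnected u w
    cases p with
    | nil => exact absurd rfl hw
    | cons h q => exact ⟨_, h⟩
  have hdC : ∀ u : V, (G.degree u : ℂ) ≠ 0 := fun u =>
    Nat.cast_ne_zero.mpr (hdegpos u).ne'
  -- eigenvalue equation, summed form
  have hsum : ∀ u : V, ∑ v ∈ G.neighborFinset u, x v = (G.degree u : ℂ) * ((μ:ℂ) * x u) := by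
    intro u
    have h1 := congrFun hx u
    simp only [Matrix.mulVec, dotProduct, Pi.smul_apply, smul_eq_mul, transMat] at h1
    have h2 : ∑ v, (if G.Adj u v then (1:ℂ)/(G.degree u) else 0) * x v
        = (1/(G.degree u : ℂ)) * ∑ v ∈ G.neighborFinset u, x v := by
      rw [SimpleGraph.neighborFinset_eq_filter, Finset.mul_sum, Finset.sum_filter]
      exact Finset.sum_congr rfl (fun v _ => by rw [ite_mul, zero_mul])
    rw [h2] at h1
    field_simp [hdC u] at h1
    linear_combination h1
  by_cases hμ1 : μ = 1
  · refine ⟨0, ?_, ?_⟩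
    · rw [hμ1]; norm_num
    · rw [hμ1]; simpa using aux_int_two
  by_cases hμm1 : μ = -1
  · refine ⟨1/2, ?_, ?_⟩
    · rw [hμm1]
      rw [show (2 * Real.pi * ((1/2 : ℚ) : ℝ)) = Real.pi by push_cast; ring]
      rw [Real.cos_pi]
    · rw [hμm1]; simpa using aux_int_two.neg
  -- generic case
  obtain ⟨s, hs⟩ := IsAlgClosed.exists_pow_nat_eq ((μ:ℂ)^2 - 1) (n := 2) two_pos
  set lam : ℂ := (μ:ℂ) + s with hlam_def
  have hquad : lam^2 - 2*(μ:ℂ)*lam + 1 = 0 := by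
    rw [hlam_def]; linear_combination hs
  have hlam0 : lam ≠ 0 := by
    intro h; rw [h] at hquad; simp at hquad
  have hsq1 : lam^2 ≠ 1 := by
    intro habs
    have hfac : (lam - 1) * (lam + 1) = 0 := by linear_combination habs
    rcases mul_eq_zero.mp hfac with h | h
    · apply hμ1
      have hl : lam = 1 := by linear_combination h
      rw [hl] at hquad
      have : (μ:ℂ) = 1 := by linear_combination -hquad/2
      exact_mod_cast this
    · apply hμm1
      have hl : lam = -1 := by linear_combination h
      rw [hl] at hquad
      have : (μ:ℂ) = -1 := by linear_combination hquad/2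
      exact_mod_cast this
  -- eigenvector of U
  set h : G.Dart → ℂ := fun a => lam * x a.toProd.2 - x a.toProd.1 with hh_def
  have key : (groverU G).mulVec h = lam • h := by
    funext a
    rw [aux_groverU_mulVec]
    have e1 : ∑ b ∈ Finset.univ.filter (fun b : G.Dart => a.toProd.2 = b.toProd.1), h b
        = lam * (∑ v ∈ G.neighborFinset a.toProd.2, x v)
          - (G.degree a.toProd.2 : ℂ) * x a.toProd.2 := by
      have e2 : ∑ b ∈ Finset.univ.filter (fun b : G.Dart => a.toProd.2 = b.toProd.1), h b
          = ∑ b ∈ Finset.univ.filter (fun b : G.Dart => a.toProd.2 = b.toProd.1),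
              (lam * x b.toProd.2 - x a.toProd.2) := by
        refine Finset.sum_congr rfl (fun b hb => ?_)
        simp only [Finset.mem_filter] at hb
        show lam * x b.toProd.2 - x b.toProd.1 = lam * x b.toProd.2 - x a.toProd.2
        rw [← hb.2]
      rw [e2, Finset.sum_sub_distrib, ← Finset.mul_sum,
        aux_dart_sum G a.toProd.2 (fun v => x v),
        aux_dart_sum G a.toProd.2 (fun _ => x a.toProd.2)]
      rw [Finset.sum_const, SimpleGraph.card_neighborFinset_eq_degree, nsmul_eq_mul]
    rw [e1, hsum]
    have hsymm2 : a.symm.toProd.2 = a.toProd.1 := rfl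
    have hsymm1 : a.symm.toProd.1 = a.toProd.2 := rfl
    simp only [hh_def, Pi.smul_apply, smul_eq_mul, hsymm1, hsymm2]
    field_simp [hdC a.toProd.2]
    linear_combination (-x a.toProd.2) * hs
  have hpow : ∀ n : ℕ, (groverU G ^ n).mulVec h = lam ^ n • h := by
    intro n
    induction n with
    | zero => simp [Matrix.one_mulVec]
    | succ n ih =>
      rw [pow_succ, ← Matrix.mulVec_mulVec, key, Matrix.mulVec_smul, ih, smul_smul,
        mul_comm lam (lam ^ n), ← pow_succ]
  -- h is nonzero somewhere
  obtain ⟨w0, hw0⟩ := (G.degree_pos_iff_exists_adj v0).mp (hdegpos v0)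
  have hne : ∃ a : G.Dart, h a ≠ 0 := by
    by_contra hc
    push_neg at hc
    have h1 := hc (SimpleGraph.Dart.mk (v0, w0) hw0)
    have h2 := hc (SimpleGraph.Dart.mk (w0, v0) hw0.symm)
    simp only [hh_def] at h1 h2
    apply hsq1
    have hxv : (lam^2 - 1) * x v0 = 0 := by linear_combination lam * h2 + h1
    rcases mul_eq_zero.mp hxv with hcase | hcase
    · linear_combination hcase
    · exact absurd hcase hv0
  obtain ⟨a0, ha0⟩ := hne
  have hlamk : lam ^ k = 1 := by
    have := congrFun (hpow k) a0
    rw [hUk, Matrix.one_mulVec] at this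
    simp only [Pi.smul_apply, smul_eq_mul] at this
    have h3 : (lam ^ k - 1) * h a0 = 0 := by linear_combination -this
    rcases mul_eq_zero.mp h3 with hcase | hcase
    · linear_combination hcase
    · exact absurd hcase ha0
  -- lam is a root of unity
  haveI : NeZero k := ⟨hk.ne'⟩
  obtain ⟨m, hmk, hm⟩ := (Complex.isPrimitiveRoot_exp k hk.ne').eq_pow_of_pow_eq_one hlamk
  have hkC : (k : ℂ) ≠ 0 := Nat.cast_ne_zero.mpr hk.ne'
  have hlam_exp : lam = Complex.exp (((2 * Real.pi * ((m:ℝ)/(k:ℝ))) : ℝ) * Complex.I) := by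
    rw [← hm, ← Complex.exp_nat_mul]
    congr 1
    push_cast
    field_simp
  -- |lam| = 1 and μ = Re lam
  have habs1 : ‖lam‖ = 1 := by
    have h1 : ‖lam‖ ^ k = 1 ^ k := by
      rw [← norm_pow, hlamk]; simp
    exact (pow_left_strictMonoOn₀ hk.ne').injOn
      (Set.mem_setOf.mpr (norm_nonneg lam))
      (Set.mem_setOf.mpr zero_le_one) h1
  have hconj : lam * (starRingEnd ℂ) lam = 1 := by
    rw [Complex.mul_conj, Complex.normSq_eq_norm_sq, habs1]
    norm_num
  have h2mu : 2 * (μ:ℂ) = lam + (starRingEnd ℂ) lam := by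
    linear_combination (lam - 2*(μ:ℂ)) * hconj - (starRingEnd ℂ) lam * hquad
  have hre : μ = lam.re := by
    have h4 : (2:ℂ) * (lam.re : ℂ) = 2 * (μ:ℂ) := by
      rw [h2mu, Complex.add_conj]
      push_cast
      ring
    have h5 : ((lam.re : ℝ) : ℂ) = ((μ : ℝ) : ℂ) := mul_left_cancel₀ two_ne_zero h4
    exact (Complex.ofReal_injective h5).symm
  refine ⟨(m : ℚ) / (k : ℚ), ?_, ?_⟩
  · rw [hre, hlam_exp, Complex.exp_ofReal_mul_I_re]
    congr 1
    push_cast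
    ring
  · -- 2μ is an algebraic integer
    have hint : IsIntegral ℤ lam := by
      refine ⟨Polynomial.X ^ k - Polynomial.C 1, Polynomial.monic_X_pow_sub_C 1 hk.ne', ?_⟩
      simp [hlamk]
    have hconj_pow : (starRingEnd ℂ) lam = lam ^ (k - 1) := by
      have h5 : lam * lam ^ (k - 1) = 1 := by
        rw [← pow_succ', Nat.sub_add_cancel hk]
        exact hlamk
      exact mul_left_cancel₀ hlam0 (hconj.trans h5.symm)
    have hint2 : IsIntegral ℤ (lam + lam ^ (k - 1)) := hint.add (hint.pow _)
    have hinj : Function.Injective (algebraMap ℝ ℂ) := fun a b hab => by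
      simpa using congrArg Complex.re hab
    apply (isIntegral_algebraMap_iff hinj).mp
    have h6 : (algebraMap ℝ ℂ) (2 * μ) = lam + lam ^ (k - 1) := by
      rw [← hconj_pow]
      rw [show ((algebraMap ℝ ℂ) (2 * μ)) = ((2 * μ : ℝ) : ℂ) from rfl]
      push_cast
      linear_combination h2mu
    rw [h6]
    exact hint2
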